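/- Let B and C be complex matrices such that C B and B C are square. Let s = ind(I − B C). Then (I − C B)^d = I + C ((I − B C)^d) B − ∑_{i=0}^{s-1} C (I − B C)^i (I − B C)^π B. -/

import Mathlib

open Matrix Finset

attribute [local instance] Classical.propDecidable

noncomputable def drazin {n : Type*} [Fintype n] [DecidableEq n]
    (A : Matrix n n ℂ) : Matrix n n ℂ :=
  if h : ∃ X : Matrix n n ℂ,
      A * X = X * A ∧ X * A * X = X ∧ ∃ k : ℕ, A ^ (k + 1) * X = A ^ k
  then h.choose else 0

noncomputable def ind {n : Type*} [Fintype n] [DecidableEq n]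
    (A : Matrix n n ℂ) : ℕ :=
  sInf {k : ℕ | (A ^ k).rank = (A ^ (k + 1)).rank}

noncomputable def spi {n : Type*} [Fintype n] [DecidableEq n]
    (A : Matrix n n ℂ) : Matrix n n ℂ :=
  1 - A * drazin A

open Polynomial

section AuxRing

section RingLemmas
variable {R : Type*} [Ring R]

lemma key_pow (A U : R) (r : ℕ) (h : A ^ (r+1) * U = A ^ r) :
    ∀ k, A ^ (r+k) * U ^ k = A ^ r := by
  intro k
  induction k with
  | zero => simp
  | succ k ih =>
    rw [show r+(k+1) = k+(r+1) by ring, pow_add, pow_succ' U k, mul_assoc,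
      ← mul_assoc (A^(r+1)) U (U^k), h, ← mul_assoc, ← pow_add,
      show k+r = r+k by ring]
    exact ih

lemma exists_drazin_of (A U : R) (hc : A * U = U * A) (r : ℕ) (h : A ^ (r+1) * U = A ^ r) :
    ∃ X : R, A * X = X * A ∧ X * A * X = X ∧ ∃ k : ℕ, A ^ (k + 1) * X = A ^ k := by
  have hC : Commute A U := hc
  refine ⟨A ^ r * U ^ (r+1), ?_, ?_, r, ?_⟩
  · exact (((Commute.refl A).pow_right r).mul_right (hC.pow_right (r+1))).eq
  · have hAX : A * (A ^ r * U ^ (r+1)) = A ^ (r+1) * U ^ (r+1) := by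
      rw [← mul_assoc, ← pow_succ']
    have hswap : U ^ (r+1) * A ^ (r+1) = A ^ (r+1) * U ^ (r+1) :=
      (hC.symm.pow_pow (r+1) (r+1)).eq
    calc A ^ r * U ^ (r+1) * A * (A ^ r * U ^ (r+1))
        = A ^ r * U ^ (r+1) * (A * (A ^ r * U ^ (r+1))) := by noncomm_ring
      _ = A ^ r * (U ^ (r+1) * A ^ (r+1)) * U ^ (r+1) := by rw [hAX]; noncomm_ring
      _ = A ^ r * A ^ (r+1) * U ^ (r+1) * U ^ (r+1) := by rw [hswap]; noncomm_ring
      _ = (A ^ (r+(r+1)) * U ^ (r+1)) * U ^ (r+1) := by rw [← pow_add]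
      _ = A ^ r * U ^ (r+1) := by rw [key_pow A U r h]
  · calc A ^ (r+1) * (A ^ r * U ^ (r+1)) = A ^ (r+(r+1)) * U ^ (r+1) := by
          rw [← mul_assoc, ← pow_add]; ring_nf
      _ = A ^ r := key_pow A U r h _

lemma drazin_unique (A X Y : R)
    (hX1 : A * X = X * A) (hX2 : X * A * X = X) (k : ℕ) (hX3 : A ^ (k+1) * X = A ^ k)
    (hY1 : A * Y = Y * A) (hY2 : Y * A * Y = Y) (l : ℕ) (hY3 : A ^ (l+1) * Y = A ^ l) :
    X = Y := by
  have hX2' : X * X * A = X := by rw [mul_assoc, ← hX1, ← mul_assoc, hX2]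
  have hY2' : A * (Y * Y) = Y := by
    rw [← mul_assoc, hY1]; exact hY2
  have ha : ∀ j, X ^ (j+1) * A ^ j = X := by
    intro j; induction j with
    | zero => simp
    | succ j ih =>
      calc X ^ (j+2) * A ^ (j+1) = X ^ j * (X * X * A) * A ^ j := by
            rw [show X ^ (j+2) = X ^ j * (X * X) by rw [pow_add, pow_two],
              show A ^ (j+1) = A * A ^ j from pow_succ' A j]; noncomm_ring
        _ = X ^ (j+1) * A ^ j := by rw [hX2', pow_succ]
        _ = X := ih
  have hb : ∀ j, A ^ j * Y ^ (j+1) = Y := by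
    intro j; induction j with
    | zero => simp
    | succ j ih =>
      calc A ^ (j+1) * Y ^ (j+2) = A ^ j * (A * (Y * Y)) * Y ^ j := by
            rw [show Y ^ (j+2) = Y * Y * Y ^ j by
              rw [show j+2 = 2+j by ring, pow_add, pow_two], pow_succ]
            noncomm_ring
        _ = A ^ j * (Y * Y ^ j) := by rw [hY2', mul_assoc]
        _ = A ^ j * Y ^ (j+1) := by rw [pow_succ']
        _ = Y := ih
  have hX3' : ∀ j, A ^ (k+j+1) * X = A ^ (k+j) := by
    intro j
    calc A ^ (k+j+1) * X = A ^ j * (A ^ (k+1) * X) := by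
          rw [← mul_assoc, ← pow_add]; ring_nf
      _ = A ^ (k+j) := by rw [hX3, ← pow_add]; ring_nf
  have hY3' : ∀ j, A ^ (l+j+1) * Y = A ^ (l+j) := by
    intro j
    calc A ^ (l+j+1) * Y = A ^ j * (A ^ (l+1) * Y) := by
          rw [← mul_assoc, ← pow_add]; ring_nf
      _ = A ^ (l+j) := by rw [hY3, ← pow_add]; ring_nf
  set N := max k l with hN
  have hXN : A ^ (N+1) * X = A ^ N := by
    have := hX3' (N - k); rwa [Nat.add_sub_cancel' (le_max_left k l)] at this
  have hYN : A ^ (N+1) * Y = A ^ N := by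
    have := hY3' (N - l); rwa [Nat.add_sub_cancel' (le_max_right k l)] at this
  have hXA : Commute A X := hX1
  have e1 : X = X * A * Y := by
    calc X = X ^ (N+1) * A ^ N := (ha N).symm
      _ = X ^ (N+1) * (A ^ (N+1) * Y) := by rw [hYN]
      _ = (X ^ (N+1) * A ^ N) * (A * Y) := by rw [pow_succ]; noncomm_ring
      _ = X * (A * Y) := by rw [ha N]
      _ = X * A * Y := by noncomm_ring
  have e2 : Y = X * A * Y := by
    calc Y = A ^ N * Y ^ (N+1) := (hb N).symm
      _ = (A ^ (N+1) * X) * Y ^ (N+1) := by rw [hXN]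
      _ = X * A * (A ^ N * Y ^ (N+1)) := by
          rw [show A ^ (N+1) * X = X * A ^ (N+1) from (hXA.pow_left (N+1)).eq,
            pow_succ']
          noncomm_ring
      _ = X * A * Y := by rw [hb N]
  rw [e1, ← e2]
end RingLemmas


section AuxMatrix
variable {p : Type*} [Fintype p] [DecidableEq p]


lemma exists_commuting_pow_eq (A : Matrix p p ℂ) :
    ∃ U : Matrix p p ℂ, ∃ r : ℕ, A * U = U * A ∧ A ^ (r+1) * U = A ^ r := by
  set P := A.charpoly with hP
  have hP0 : P ≠ 0 := A.charpoly_monic.ne_zero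
  set r := P.rootMultiplicity 0 with hr
  set q := P /ₘ (X - Polynomial.C (0:ℂ)) ^ r with hq
  have hfac : (X - Polynomial.C (0:ℂ)) ^ r * q = P :=
    P.pow_mul_divByMonic_rootMultiplicity_eq 0
  have hc0 : q.eval 0 ≠ 0 := eval_divByMonic_pow_rootMultiplicity_ne_zero 0 hP0
  set c := q.coeff 0 with hc
  have hcne : c ≠ 0 := by rwa [hc, coeff_zero_eq_eval_zero]
  have hqsplit : X * q.divX + Polynomial.C c = q := X_mul_divX_add q
  have haev : Polynomial.aeval A P = 0 := A.aeval_self_charpoly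
  set H := Polynomial.aeval A q.divX with hH
  have hfac' : A ^ r * (A * H + c • (1 : Matrix p p ℂ)) = 0 := by
    have := congrArg (Polynomial.aeval A) hfac
    simp only [_root_.map_mul, map_pow, map_sub, Polynomial.aeval_X, Polynomial.aeval_C, map_zero,
      sub_zero, haev] at this
    rw [← hqsplit] at this
    simp only [map_add, _root_.map_mul, Polynomial.aeval_X, Polynomial.aeval_C] at this
    rw [← this]
    congr 1
    congr 1
    rw [Algebra.algebraMap_eq_smul_one]
  refine ⟨(-c⁻¹) • H, r, ?_, ?_⟩
  · have h1 : A * H = Polynomial.aeval A (X * q.divX) := by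
      simp [_root_.map_mul, hH]
    have h2 : H * A = Polynomial.aeval A (X * q.divX) := by
      rw [mul_comm X q.divX]; simp [_root_.map_mul, hH]
    rw [mul_smul_comm, smul_mul_assoc, h1, h2]
  · have hexp : A ^ (r+1) * H = -(c • A ^ r) := by
      have : A ^ r * (A * H) + c • A ^ r = 0 := by
        rw [← hfac']; rw [mul_add]; congr 1
        rw [Matrix.mul_smul, mul_one]
      rw [← mul_assoc, ← pow_succ] at this
      linear_combination (norm := noncomm_ring) this
    rw [mul_smul_comm, hexp, smul_neg, smul_smul, neg_mul, neg_smul, neg_neg,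
      inv_mul_cancel₀ hcne, one_smul]

lemma drazin_exists (A : Matrix p p ℂ) :
    ∃ X : Matrix p p ℂ,
      A * X = X * A ∧ X * A * X = X ∧ ∃ k : ℕ, A ^ (k + 1) * X = A ^ k := by
  obtain ⟨U, r, h1, h2⟩ := exists_commuting_pow_eq A
  exact exists_drazin_of A U h1 r h2

lemma drazin_spec (A : Matrix p p ℂ) :
    A * drazin A = drazin A * A ∧ drazin A * A * drazin A = drazin A ∧
      ∃ k : ℕ, A ^ (k + 1) * drazin A = A ^ k := by
  have h := drazin_exists A
  rw [drazin, dif_pos h]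
  exact h.choose_spec

lemma drazin_eq (A X : Matrix p p ℂ) (h1 : A * X = X * A) (h2 : X * A * X = X)
    (k : ℕ) (h3 : A ^ (k+1) * X = A ^ k) : drazin A = X := by
  obtain ⟨s1, s2, l, s3⟩ := drazin_spec A
  exact drazin_unique A (drazin A) X s1 s2 l s3 h1 h2 k h3

lemma pow_ind_mul_spi (A : Matrix p p ℂ) : A ^ (ind A) * spi A = 0 := by
  obtain ⟨h1, h2, k, h3⟩ := drazin_spec A
  set D := drazin A with hD
  set π : Matrix p p ℂ := 1 - A * D with hπ
  have hC : Commute A π := by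
    show A * π = π * A
    rw [hπ, mul_sub, sub_mul, mul_one, one_mul, ← mul_assoc, mul_assoc, h1, ← mul_assoc, h1]
  have hAk : A ^ k * π = 0 := by
    rw [hπ, mul_sub, mul_one, ← mul_assoc, ← pow_succ, h3, sub_self]
  have hkmem : k ∈ {j : ℕ | (A ^ j).rank = (A ^ (j+1)).rank} := by
    refine le_antisymm ?_ ?_
    · rw [← h3]; exact Matrix.rank_mul_le_left _ _
    · rw [pow_succ]; exact Matrix.rank_mul_le_left _ _
  set s := ind A with hsdef
  have hs : (A ^ s).rank = (A ^ (s+1)).rank := Nat.sInf_mem ⟨k, hkmem⟩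
  have hsle : s ≤ k := Nat.sInf_le hkmem
  have hrange1 : LinearMap.range (A ^ (s+1)).mulVecLin
      = LinearMap.range (A ^ s).mulVecLin := by
    apply Submodule.eq_of_le_of_finrank_eq
    · rw [pow_succ, Matrix.mulVecLin_mul]
      exact LinearMap.range_comp_le_range _ _
    · exact hs.symm
  have hrangeall : ∀ j, LinearMap.range (A ^ (s+j)).mulVecLin
      = LinearMap.range (A ^ s).mulVecLin := by
    intro j
    induction j with
    | zero => rfl
    | succ j ih =>
      rw [show s+(j+1) = (s+j)+1 by ring, pow_succ', Matrix.mulVecLin_mul,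
        LinearMap.range_comp, ih, ← LinearMap.range_comp, ← Matrix.mulVecLin_mul,
        ← pow_succ', hrange1]
  have hπAs : π * A ^ s = 0 := by
    have hv : ∀ v, (π * A ^ s) *ᵥ v = 0 := by
      intro v
      have hmem : (A ^ s) *ᵥ v ∈ LinearMap.range (A ^ k).mulVecLin := by
        rw [show k = s + (k - s) by omega, hrangeall (k-s)]
        exact ⟨v, rfl⟩
      obtain ⟨w, hw⟩ := hmem
      rw [← Matrix.mulVec_mulVec, ← hw]
      rw [Matrix.mulVecLin_apply] at hw ⊢
      rw [Matrix.mulVec_mulVec, ← hC.pow_left k |>.eq, hAk, Matrix.zero_mulVec]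
    ext i j
    have := congrFun (hv (Pi.single j 1)) i
    simpa using this
  show A ^ s * spi A = 0
  have : spi A = π := rfl
  rw [this, (hC.pow_left s).eq, hπAs]

end AuxMatrix

theorem stmt18 {n m : ℕ} (C : Matrix (Fin n) (Fin m) ℂ) (B : Matrix (Fin m) (Fin n) ℂ) :
    drazin (1 - C * B) = 1 + C * drazin (1 - B * C) * B -
      ∑ i ∈ range (ind (1 - B * C)),
        C * (1 - B * C) ^ i * spi (1 - B * C) * B := by
  set A : Matrix (Fin m) (Fin m) ℂ := 1 - B * C with hA
  set M : Matrix (Fin n) (Fin n) ℂ := 1 - C * B with hM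
  obtain ⟨hd1, hd2, k, hd3⟩ := drazin_spec A
  set D := drazin A with hD
  set π : Matrix (Fin m) (Fin m) ℂ := spi A with hπdef
  have hπ : π = 1 - A * D := rfl
  set s := ind A with hs
  have hsπ : A ^ s * π = 0 := pow_ind_mul_spi A
  -- basic commutation facts
  have hAπ : A * π = π * A := by
    rw [hπ, mul_sub A 1 (A*D), sub_mul 1 (A*D) A, mul_one, one_mul, hd1, ← mul_assoc, hd1]
  have hCπ : Commute A π := hAπ
  have hAD : Commute A D := hd1
  have hDπ : D * π = 0 := by
    rw [hπ, mul_sub D 1 (A*D), mul_one, ← mul_assoc, hd2, sub_self]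
  have hππ : π * π = π := by
    nth_rewrite 1 [hπ]
    rw [sub_mul 1 (A*D) π, one_mul, mul_assoc, hDπ, mul_zero, sub_zero]
  have hApowπ : ∀ j, A ^ j * π = π * A ^ j := fun j => (hCπ.pow_left j).eq
  have hπzero : ∀ j, s ≤ j → A ^ j * π = 0 := by
    intro j hj
    rw [show j = (j - s) + s by omega, pow_add, mul_assoc, hsπ, mul_zero]
  -- intertwining
  have hCA : C * A = M * C := by
    rw [hA, hM, Matrix.mul_sub, Matrix.sub_mul, Matrix.mul_one, Matrix.one_mul,
      Matrix.mul_assoc]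
  have hAB : A * B = B * M := by
    rw [hA, hM, Matrix.mul_sub, Matrix.sub_mul, Matrix.mul_one, Matrix.one_mul,
      Matrix.mul_assoc]
  have hCA' : ∀ o : ℕ, ∀ Z : Matrix (Fin m) (Fin o) ℂ, M * (C * Z) = C * (A * Z) := by
    intro o Z; rw [← Matrix.mul_assoc, ← hCA, Matrix.mul_assoc]
  have hBC' : ∀ o : ℕ, ∀ Z : Matrix (Fin m) (Fin o) ℂ, B * (C * Z) = Z - A * Z := by
    intro o Z
    rw [← Matrix.mul_assoc, show (B * C : Matrix (Fin m) (Fin m) ℂ) = 1 - A by rw [hA]; abel,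
      Matrix.sub_mul, Matrix.one_mul]
  have hπA' : ∀ o : ℕ, ∀ Z : Matrix (Fin m) (Fin o) ℂ, π * (A * Z) = A * (π * Z) := by
    intro o Z; rw [← Matrix.mul_assoc, ← hAπ, Matrix.mul_assoc]
  have hππ' : ∀ o : ℕ, ∀ Z : Matrix (Fin m) (Fin o) ℂ, π * (π * Z) = π * Z := by
    intro o Z; rw [← Matrix.mul_assoc, hππ]
  have hπApow : ∀ j, ∀ o : ℕ, ∀ Z : Matrix (Fin m) (Fin o) ℂ,
      π * (A ^ j * Z) = A ^ j * (π * Z) := by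
    intro j o Z; rw [← Matrix.mul_assoc, ← hApowπ, Matrix.mul_assoc]
  have hDA' : ∀ j, ∀ o : ℕ, ∀ Z : Matrix (Fin m) (Fin o) ℂ,
      D * (A ^ j * Z) = A ^ j * (D * Z) := by
    intro j o Z; rw [← Matrix.mul_assoc, (hAD.symm.pow_right j).eq, Matrix.mul_assoc]
  have hDπ' : ∀ o : ℕ, ∀ Z : Matrix (Fin m) (Fin o) ℂ, D * (π * Z) = 0 := by
    intro o Z; rw [← Matrix.mul_assoc, hDπ, Matrix.zero_mul]
  have hpowpow : ∀ i j : ℕ, ∀ o : ℕ, ∀ Z : Matrix (Fin m) (Fin o) ℂ,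
      A ^ i * (A ^ j * Z) = A ^ (i+j) * Z := by
    intro i j o Z; rw [← Matrix.mul_assoc, ← pow_add]
  have hApow1 : ∀ j : ℕ, ∀ o : ℕ, ∀ Z : Matrix (Fin m) (Fin o) ℂ,
      A * (A ^ j * Z) = A ^ (j+1) * Z := by
    intro j o Z; rw [← Matrix.mul_assoc, ← pow_succ']
  have hApow1' : ∀ j : ℕ, ∀ o : ℕ, ∀ Z : Matrix (Fin m) (Fin o) ℂ,
      A ^ j * (A * Z) = A ^ (j+1) * Z := by
    intro j o Z; rw [← Matrix.mul_assoc, ← pow_succ]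
  -- terms
  set T : ℕ → Matrix (Fin n) (Fin n) ℂ := fun i => C * A ^ i * π * B with hT
  set N := ∑ i ∈ range s, T i with hN
  set Xc := 1 + C * D * B - N with hXc
  have hTdef : ∀ i, T i = C * (A ^ i * (π * B)) := by
    intro i; rw [hT]; simp only [Matrix.mul_assoc]
  have hTz : ∀ j, s ≤ j → T j = 0 := by
    intro j hj
    rw [hTdef, ← Matrix.mul_assoc (A ^ j) π B, hπzero j hj, Matrix.zero_mul,
      Matrix.mul_zero]
  have hMT : ∀ i, M * T i = T (i+1) := by
    intro i
    rw [hTdef, hTdef, hCA', hApow1]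
  have hTM : ∀ i, T i * M = T (i+1) := by
    intro i
    rw [hTdef, hTdef]
    rw [show C * (A ^ i * (π * B)) * M = C * (A ^ i * (π * (B * M))) by
      simp only [Matrix.mul_assoc]]
    rw [← hAB, hπA', hApow1']
  have hMCD : M * (C * D * B) = C * (A * D) * B := by
    rw [show (C * D * B : Matrix (Fin n) (Fin n) ℂ) = C * (D * B) by
      simp only [Matrix.mul_assoc], hCA',
      show C * (A * (D * B)) = C * (A * D) * B by simp only [Matrix.mul_assoc]]
  have hCDM : (C * D * B) * M = C * (A * D) * B := by
    rw [show (C * D * B : Matrix (Fin n) (Fin n) ℂ) * M = C * (D * (B * M)) by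
      simp only [Matrix.mul_assoc], ← hAB, ← Matrix.mul_assoc D A B, ← hd1]
    simp only [Matrix.mul_assoc]
  -- products with Xc
  have l : M * (1 + C * D * B - N) = M + C * (A * D) * B - ∑ i ∈ range s, T (i+1) := by
    rw [Matrix.mul_sub, Matrix.mul_add, Matrix.mul_one, hMCD, hN, Finset.mul_sum,
      Finset.sum_congr rfl fun i _ => hMT i]
  have r : (1 + C * D * B - N) * M = M + C * (A * D) * B - ∑ i ∈ range s, T (i+1) := by
    rw [Matrix.sub_mul, Matrix.add_mul, Matrix.one_mul, hCDM, hN, Finset.sum_mul,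
      Finset.sum_congr rfl fun i _ => hTM i]
  have hcomm : M * Xc = Xc * M := by rw [hXc, l, r]
  have t0 : T 0 = C * B - C * (A * D) * B := by
    rw [hTdef, pow_zero, Matrix.one_mul, hπ, Matrix.sub_mul 1 (A*D) B, Matrix.one_mul,
      Matrix.mul_sub, ← Matrix.mul_assoc]
  have e2 : M + C * (A * D) * B = 1 - T 0 := by rw [t0, hM]; abel
  have e3 : T 0 + ∑ i ∈ range s, T (i+1) = N := by
    rw [add_comm, ← Finset.sum_range_succ', Finset.sum_range_succ, hTz s le_rfl, add_zero]
  have hkey : M * Xc = 1 - N := by rw [hXc, l, e2, sub_sub, e3]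
  -- (C*D*B) * T i = 0
  have hCDT : ∀ i, (C * D * B) * T i = 0 := by
    intro i
    rw [hTdef]
    rw [show (C * D * B : Matrix (Fin n) (Fin n) ℂ) * (C * (A ^ i * (π * B)))
        = C * (D * (B * (C * (A ^ i * (π * B))))) by simp only [Matrix.mul_assoc]]
    rw [hBC', hApow1, Matrix.mul_sub, hDA', hDA', hDπ', Matrix.mul_zero, Matrix.mul_zero,
      sub_zero, Matrix.mul_zero]
  -- T j * T i = T (j+i) - T (j+(i+1))
  have hTT : ∀ j i, T j * T i = T (j+i) - T (j+(i+1)) := by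
    intro j i
    rw [hTdef j, hTdef i, hTdef (j+i), hTdef (j+(i+1))]
    rw [show C * (A ^ j * (π * B)) * (C * (A ^ i * (π * B)))
        = C * (A ^ j * (π * (B * (C * (A ^ i * (π * B)))))) by simp only [Matrix.mul_assoc]]
    rw [hBC', hApow1, Matrix.mul_sub, hπApow, hπApow, hππ', Matrix.mul_sub,
      hpowpow, hpowpow, Matrix.mul_sub]
  -- N * N = N
  have hNN : N * N = N := by
    nth_rewrite 2 [hN]
    rw [Finset.sum_mul]
    have e : ∀ j ∈ range s, T j * N = T j := by
      intro j _
      rw [hN, Finset.mul_sum]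
      rw [Finset.sum_congr rfl fun i _ => hTT j i,
        Finset.sum_range_sub' (fun i => T (j+i)) s, add_zero,
        hTz (j+s) (by omega), sub_zero]
    rw [Finset.sum_congr rfl e]
  -- Xc * N = 0
  have hCDBN : C * D * B * N = 0 := by
    rw [hN, Finset.mul_sum]
    exact Finset.sum_eq_zero fun i _ => hCDT i
  have hXN : Xc * N = 0 := by
    rw [hXc, Matrix.sub_mul, Matrix.add_mul, Matrix.one_mul, hNN, hCDBN, add_zero, sub_self]
  -- Drazin equations for Xc
  have heq2 : Xc * M * Xc = Xc := by
    rw [Matrix.mul_assoc, hkey, Matrix.mul_sub, Matrix.mul_one, hXN, sub_zero]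
  have hMpowC : ∀ j : ℕ, ∀ o : ℕ, ∀ Z : Matrix (Fin m) (Fin o) ℂ,
      M ^ j * (C * Z) = C * (A ^ j * Z) := by
    intro j
    induction j with
    | zero => intro o Z; rw [pow_zero, pow_zero, Matrix.one_mul, Matrix.one_mul]
    | succ t ih =>
      intro o Z
      rw [pow_succ', Matrix.mul_assoc, ih, hCA', hApow1]
  have hMsN : M ^ s * N = 0 := by
    rw [hN, Finset.mul_sum]
    refine Finset.sum_eq_zero fun i _ => ?_
    rw [hTdef i, hMpowC, hpowpow, ← hTdef (s+i)]
    exact hTz (s+i) (by omega)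
  have heq3 : M ^ (s+1) * Xc = M ^ s := by
    rw [pow_succ, Matrix.mul_assoc, hkey, Matrix.mul_sub, Matrix.mul_one, hMsN, sub_zero]
  exact drazin_eq M Xc hcomm heq2 s heq3
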